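/- For each τ ∈ T there exists one and only one invariant probability measure π_τ for P_τ, and for every bounded measurable φ : S → ℝ and every n ≥ 1 one has sup_{τ∈T} sup_{x∈S} |P_τⁿφ(x) − ∫_S φ dπ_τ| ≤ C‖φ‖ e^{−ρn}, where ρ = log(1/(1 − δ·μ(U₀))) > 0 and C = 2/(1 − δ·μ(U₀)); in particular C and ρ do not depend on τ or on φ. -/

import Mathlib

open MeasureTheory Filter Topology
open scoped ENNReal NNReal
set_option linter.unusedSectionVars false
set_option maxHeartbeats 1000000

section Aux

variable {S : Type*} [MetricSpace S] [CompactSpace S] [Nonempty S]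
  [MeasurableSpace S] [BorelSpace S]

lemma aux_integrable (ν : Measure S) [IsFiniteMeasure ν] {f : S → ℝ} (hf : Measurable f)
    {C : ℝ} (hC : ∀ y, |f y| ≤ C) : Integrable f ν :=
  (integrable_const C).mono' hf.aestronglyMeasurable (ae_of_all _ (by simpa using hC))

variable (μ : Measure S) [IsProbabilityMeasure μ]

lemma aux_bdd (k : S → S → ℝ) (hkc : Continuous fun z : S × S => k z.1 z.2) :
    ∃ M : ℝ, 1 ≤ M ∧ ∀ x y, k x y ≤ M := by
  obtain ⟨z, hz⟩ := hkc.exists_forall_ge (by simp [Filter.cocompact_eq_bot])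
  exact ⟨max 1 (k z.1 z.2), le_max_left _ _,
    fun x y => le_trans (hz (x, y)) (le_max_right _ _)⟩

lemma doeblin_main (k : S → S → ℝ)
    (hkc : Continuous fun z : S × S => k z.1 z.2)
    (hk0 : ∀ x y, 0 ≤ k x y)
    (hkint : ∀ x, ∫ y, k x y ∂μ = 1)
    (U₀ : Set S) (hU₀ : MeasurableSet U₀)
    (δ : ℝ) (hδ : 0 < δ)
    (hα0 : 0 < δ * (μ U₀).toReal) (hα1 : δ * (μ U₀).toReal < 1)
    (hlow : ∀ x, ∀ y ∈ U₀, δ ≤ k x y) :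
    ∃ π : Measure S, IsProbabilityMeasure π ∧
      (∀ E, MeasurableSet E → (π E).toReal = ∫ x, (∫ y in E, k x y ∂μ) ∂π) ∧
      (∀ π' : Measure S, IsProbabilityMeasure π' →
        (∀ E, MeasurableSet E → (π' E).toReal = ∫ x, (∫ y in E, k x y ∂μ) ∂π') → π' = π) ∧
      (∀ φ : S → ℝ, Measurable φ → ∀ K : ℝ, (∀ x, |φ x| ≤ K) →
        ∀ n : ℕ, ∀ x,
          |(fun ψ x => ∫ y, k x y * ψ y ∂μ)^[n] φ x - ∫ y, φ y ∂π| ≤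
            2 * K * (1 - δ * (μ U₀).toReal) ^ n) := by
  obtain ⟨M, hM1, hMle⟩ := aux_bdd k hkc
  set lam : ℝ := 1 - δ * (μ U₀).toReal with hlam_def
  have hlam0 : 0 < lam := by simp only [hlam_def]; linarith
  have hlam1 : lam < 1 := by simp only [hlam_def]; linarith
  set Pk : (S → ℝ) → S → ℝ := fun ψ x => ∫ y, k x y * ψ y ∂μ with hPk_def
  have hkm : Measurable fun z : S × S => k z.1 z.2 := hkc.measurable
  have hkx : ∀ x, Measurable (k x) := by
    intro x
    exact (hkc.comp (Continuous.prodMk_right x)).measurable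
  have hky : ∀ y, Measurable (fun x => k x y) := by
    intro y
    exact (hkc.comp (continuous_id.prodMk continuous_const)).measurable
  -- integrability of k x y * φ y
  have hinteg : ∀ (φ : S → ℝ), Measurable φ → ∀ C : ℝ, (∀ y, |φ y| ≤ C) →
      ∀ x, Integrable (fun y => k x y * φ y) μ := by
    intro φ hm C hC x
    have hC0 : 0 ≤ C := le_trans (abs_nonneg _) (hC (Classical.arbitrary S))
    refine aux_integrable μ ((hkx x).mul hm) (C := M * C) (fun y => ?_)
    rw [abs_mul, abs_of_nonneg (hk0 x y)]
    exact mul_le_mul (hMle x y) (hC y) (abs_nonneg _) (by linarith)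
  -- measurability of Pk φ
  have hPmeas : ∀ (φ : S → ℝ), Measurable φ → Measurable (Pk φ) := by
    intro φ hm
    have : StronglyMeasurable fun z : S × S => k z.1 z.2 * φ z.2 :=
      (hkm.mul (hm.comp measurable_snd)).stronglyMeasurable
    exact this.integral_prod_right'.measurable
  -- bounds preserved
  have hPbd : ∀ (φ : S → ℝ), Measurable φ → ∀ a b : ℝ, (∀ y, a ≤ φ y ∧ φ y ≤ b) →
      ∀ x, a ≤ Pk φ x ∧ Pk φ x ≤ b := by
    intro φ hm a b hab x
    have hC : ∀ y, |φ y| ≤ max |a| |b| := by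
      intro y
      rw [abs_le]
      constructor
      · exact le_trans (by simpa using neg_le_neg (le_max_left |a| |b|))
          (le_trans (neg_abs_le a) (hab y).1)
      · exact le_trans (hab y).2 (le_trans (le_abs_self b) (le_max_right _ _))
    have h1 : Integrable (fun y => k x y * φ y) μ := hinteg φ hm _ hC x
    have hka : Integrable (fun y => k x y * a) μ :=
      (aux_integrable μ (hkx x) (C := M) fun y => by
        rw [abs_of_nonneg (hk0 x y)]; exact hMle x y).mul_const a
    have hkb : Integrable (fun y => k x y * b) μ :=
      (aux_integrable μ (hkx x) (C := M) fun y => by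
        rw [abs_of_nonneg (hk0 x y)]; exact hMle x y).mul_const b
    constructor
    · have : ∫ y, k x y * a ∂μ ≤ ∫ y, k x y * φ y ∂μ :=
        integral_mono hka h1 fun y => mul_le_mul_of_nonneg_left (hab y).1 (hk0 x y)
      simpa [integral_mul_const, hkint x] using this
    · have : ∫ y, k x y * φ y ∂μ ≤ ∫ y, k x y * b ∂μ :=
        integral_mono h1 hkb fun y => mul_le_mul_of_nonneg_left (hab y).2 (hk0 x y)
      simpa [integral_mul_const, hkint x] using this
  -- oscillation contraction
  have hosc : ∀ (φ : S → ℝ), Measurable φ → ∀ a b : ℝ, (∀ y, a ≤ φ y ∧ φ y ≤ b) →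
      ∀ x x', Pk φ x - Pk φ x' ≤ lam * (b - a) := by
    intro φ hm a b hab x x'
    have hC : ∀ y, |φ y| ≤ max |a| |b| := by
      intro y
      rw [abs_le]
      refine ⟨le_trans (by simpa using neg_le_neg (le_max_left |a| |b|))
          (le_trans (neg_abs_le a) (hab y).1), ?_⟩
      exact le_trans (hab y).2 (le_trans (le_abs_self b) (le_max_right _ _))
    set r : S → S → ℝ := fun x y => k x y - δ * U₀.indicator (fun _ => 1) y with hr_def
    have hind_m : Measurable (U₀.indicator (fun _ : S => (1:ℝ))) :=
      measurable_const.indicator hU₀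
    have hind_bd : ∀ y, |U₀.indicator (fun _ : S => (1:ℝ)) y| ≤ 1 := by
      intro y
      by_cases hy : y ∈ U₀ <;> simp [hy]
    have hr0 : ∀ z y, 0 ≤ r z y := by
      intro z y
      by_cases hy : y ∈ U₀
      · simp only [hr_def, Set.indicator_of_mem hy, mul_one, sub_nonneg]
        exact hlow z y hy
      · simp only [hr_def, Set.indicator_of_notMem hy, mul_zero, sub_zero]
        exact hk0 z y
    have hrm : ∀ z, Measurable (r z) := fun z => (hkx z).sub (measurable_const.mul hind_m)
    have hrbd : ∀ z y, |r z y| ≤ M := by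
      intro z y
      rw [abs_of_nonneg (hr0 z y)]
      calc r z y ≤ k z y := by
            simp only [hr_def, sub_le_self_iff]
            exact mul_nonneg hδ.le (Set.indicator_nonneg (fun _ _ => zero_le_one) y)
        _ ≤ M := hMle z y
    have hrint : ∀ z, ∫ y, r z y ∂μ = lam := by
      intro z
      have h1 : Integrable (fun y => k z y) μ :=
        aux_integrable μ (hkx z) (C := M) fun y => by
          rw [abs_of_nonneg (hk0 z y)]; exact hMle z y
      have h2 : Integrable (fun y => δ * U₀.indicator (fun _ => (1:ℝ)) y) μ :=
        (aux_integrable μ hind_m (C := 1) hind_bd).const_mul δ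
      simp only [hr_def]
      rw [integral_sub h1 h2, hkint z, integral_const_mul,
        integral_indicator_const (1:ℝ) hU₀]
      simp [hlam_def, measureReal_def]
    have hrphi_int : ∀ z, Integrable (fun y => r z y * φ y) μ := by
      intro z
      refine aux_integrable μ ((hrm z).mul hm) (C := M * max |a| |b|) fun y => ?_
      rw [abs_mul]
      exact mul_le_mul (hrbd z y) (hC y) (abs_nonneg _)
        (le_trans (abs_nonneg _) (hrbd z y))
    have hrconst_int : ∀ z (c : ℝ), Integrable (fun y => r z y * c) μ := by
      intro z c
      exact (aux_integrable μ (hrm z) (C := M) (hrbd z)).mul_const c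
    have hsplit : ∀ z, Pk φ z = (∫ y, r z y * φ y ∂μ) +
        ∫ y, δ * U₀.indicator (fun _ => (1:ℝ)) y * φ y ∂μ := by
      intro z
      have h2 : Integrable (fun y => δ * U₀.indicator (fun _ => (1:ℝ)) y * φ y) μ := by
        refine aux_integrable μ ((measurable_const.mul hind_m).mul hm)
          (C := δ * max |a| |b|) fun y => ?_
        rw [abs_mul, abs_mul, abs_of_nonneg hδ.le]
        refine mul_le_mul ?_ (hC y) (abs_nonneg _) (by positivity)
        nlinarith [hind_bd y, abs_nonneg (U₀.indicator (fun _ : S => (1:ℝ)) y)]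
      rw [← integral_add (hrphi_int z) h2]
      show (∫ y, k z y * φ y ∂μ) = _
      congr 1
      funext y
      simp only [hr_def]
      ring
    have hub : ∫ y, r x y * φ y ∂μ ≤ lam * b := by
      have : ∫ y, r x y * φ y ∂μ ≤ ∫ y, r x y * b ∂μ :=
        integral_mono (hrphi_int x) (hrconst_int x b)
          fun y => mul_le_mul_of_nonneg_left (hab y).2 (hr0 x y)
      calc ∫ y, r x y * φ y ∂μ ≤ ∫ y, r x y * b ∂μ := this
        _ = lam * b := by rw [integral_mul_const, hrint x]
    have hlb : lam * a ≤ ∫ y, r x' y * φ y ∂μ := by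
      have : ∫ y, r x' y * a ∂μ ≤ ∫ y, r x' y * φ y ∂μ :=
        integral_mono (hrconst_int x' a) (hrphi_int x')
          fun y => mul_le_mul_of_nonneg_left (hab y).1 (hr0 x' y)
      calc lam * a = ∫ y, r x' y * a ∂μ := by rw [integral_mul_const, hrint x']
        _ ≤ _ := this
    have := hsplit x
    have := hsplit x'
    have : Pk φ x - Pk φ x' = (∫ y, r x y * φ y ∂μ) - ∫ y, r x' y * φ y ∂μ := by
      rw [hsplit x, hsplit x']; ring
    rw [this]
    have : lam * (b - a) = lam * b - lam * a := by ring
    rw [this]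
    exact sub_le_sub hub hlb
  -- iterated boundedness and measurability
  have habs : ∀ (a b v : ℝ), a ≤ v → v ≤ b → |v| ≤ max |a| |b| := by
    intro a b v h1 h2
    rw [abs_le]
    refine ⟨le_trans (by simpa using neg_le_neg (le_max_left |a| |b|))
        (le_trans (neg_abs_le a) h1), ?_⟩
    exact le_trans h2 (le_trans (le_abs_self b) (le_max_right _ _))
  have hiterbd : ∀ (ψ : S → ℝ), Measurable ψ → ∀ a b : ℝ, (∀ y, a ≤ ψ y ∧ ψ y ≤ b) →
      ∀ n, Measurable (Pk^[n] ψ) ∧ ∀ x, a ≤ Pk^[n] ψ x ∧ Pk^[n] ψ x ≤ b := by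
    intro ψ hm a b hab n
    induction n with
    | zero => exact ⟨hm, by simpa using hab⟩
    | succ n ih =>
      rw [Function.iterate_succ_apply']
      exact ⟨hPmeas _ ih.1, hPbd _ ih.1 a b ih.2⟩
  -- main contraction induction
  have hiter : ∀ (φ : S → ℝ), Measurable φ → ∀ a b : ℝ, (∀ y, a ≤ φ y ∧ φ y ≤ b) →
      ∀ n, ∃ a' b' : ℝ, a ≤ a' ∧ b' ≤ b ∧ (∀ x, a' ≤ Pk^[n] φ x ∧ Pk^[n] φ x ≤ b') ∧
        b' - a' ≤ lam ^ n * (b - a) := by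
    intro φ hm a b hab n
    induction n with
    | zero => exact ⟨a, b, le_refl _, le_refl _, by simpa using hab, by simp⟩
    | succ n ih =>
      obtain ⟨a', b', ha', hb', hbd, hosc'⟩ := ih
      have hmn : Measurable (Pk^[n] φ) := (hiterbd φ hm a b hab n).1
      have hab' : a' ≤ b' := by
        obtain ⟨x0⟩ := (inferInstance : Nonempty S)
        exact le_trans (hbd x0).1 (hbd x0).2
      -- bounds for Pk^[n+1] φ
      have hbd1 : ∀ x, a' ≤ Pk^[n+1] φ x ∧ Pk^[n+1] φ x ≤ b' := by
        intro x
        rw [Function.iterate_succ_apply']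
        exact hPbd _ hmn a' b' hbd x
      have hosc1 : ∀ x x', Pk^[n+1] φ x - Pk^[n+1] φ x' ≤ lam * (b' - a') := by
        intro x x'
        rw [Function.iterate_succ_apply']
        exact hosc _ hmn a' b' hbd x x'
      have hbdd_above : BddAbove (Set.range (Pk^[n+1] φ)) :=
        ⟨b', by rintro v ⟨x, rfl⟩; exact (hbd1 x).2⟩
      have hbdd_below : BddBelow (Set.range (Pk^[n+1] φ)) :=
        ⟨a', by rintro v ⟨x, rfl⟩; exact (hbd1 x).1⟩
      refine ⟨⨅ x, Pk^[n+1] φ x, ⨆ x, Pk^[n+1] φ x, ?_, ?_, ?_, ?_⟩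
      · exact le_trans ha' (le_ciInf fun x => (hbd1 x).1)
      · exact le_trans (ciSup_le fun x => (hbd1 x).2) hb'
      · exact fun x => ⟨ciInf_le hbdd_below x, le_ciSup hbdd_above x⟩
      · have h1 : (⨆ x, Pk^[n+1] φ x) ≤ (⨅ x, Pk^[n+1] φ x) + lam * (b' - a') := by
          refine ciSup_le fun x => ?_
          have : Pk^[n+1] φ x - lam * (b' - a') ≤ ⨅ x', Pk^[n+1] φ x' := by
            refine le_ciInf fun x' => ?_
            have := hosc1 x x'
            linarith
          linarith
        have h2 : lam * (b' - a') ≤ lam * (lam ^ n * (b - a)) :=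
          mul_le_mul_of_nonneg_left hosc' hlam0.le
        calc (⨆ x, Pk^[n+1] φ x) - (⨅ x, Pk^[n+1] φ x) ≤ lam * (b' - a') := by linarith
          _ ≤ lam * (lam ^ n * (b - a)) := h2
          _ = lam ^ (n+1) * (b - a) := by ring
  -- key limit construction
  set xs : S := Classical.arbitrary S with hxs_def
  have hkey : ∀ (φ : S → ℝ), Measurable φ → ∀ a b : ℝ, (∀ y, a ≤ φ y ∧ φ y ≤ b) →
      ∃ ℓ : ℝ, Tendsto (fun n => Pk^[n] φ xs) atTop (𝓝 ℓ) ∧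
        ∀ n x, |Pk^[n] φ x - ℓ| ≤ lam ^ n * (b - a) := by
    intro φ hm a b hab
    have hcauchy : CauchySeq (fun n => Pk^[n] φ xs) := by
      refine cauchySeq_of_le_geometric lam (b - a) hlam1 fun n => ?_
      obtain ⟨a', b', ha', hb', hbd, hosc'⟩ := hiter φ hm a b hab n
      have h1 : a' ≤ Pk^[n] φ xs ∧ Pk^[n] φ xs ≤ b' := hbd xs
      have h2 : a' ≤ Pk^[n+1] φ xs ∧ Pk^[n+1] φ xs ≤ b' := by
        rw [Function.iterate_succ_apply']
        exact hPbd _ (hiterbd φ hm a b hab n).1 a' b' hbd xs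
      rw [Real.dist_eq, abs_le]
      constructor
      · have : (b - a) * lam ^ n = lam ^ n * (b - a) := by ring
        rw [this]
        linarith [h1.1, h1.2, h2.1, h2.2]
      · have : (b - a) * lam ^ n = lam ^ n * (b - a) := by ring
        rw [this]
        linarith [h1.1, h1.2, h2.1, h2.2]
    obtain ⟨ℓ, hℓ⟩ := cauchySeq_tendsto_of_complete hcauchy
    refine ⟨ℓ, hℓ, fun n x => ?_⟩
    obtain ⟨a', b', ha', hb', hbd, hosc'⟩ := hiter φ hm a b hab n
    have hmem : ∀ m, n ≤ m → a' ≤ Pk^[m] φ xs ∧ Pk^[m] φ xs ≤ b' := by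
      intro m hnm
      obtain ⟨j, rfl⟩ := Nat.exists_eq_add_of_le hnm
      rw [add_comm, Function.iterate_add_apply]
      exact (hiterbd (Pk^[n] φ) (hiterbd φ hm a b hab n).1 a' b' hbd j).2 xs
    have hℓ_lb : a' ≤ ℓ :=
      ge_of_tendsto hℓ (eventually_atTop.2 ⟨n, fun m hm' => (hmem m hm').1⟩)
    have hℓ_ub : ℓ ≤ b' :=
      le_of_tendsto hℓ (eventually_atTop.2 ⟨n, fun m hm' => (hmem m hm').2⟩)
    have hx := hbd x
    rw [abs_le]
    constructor <;> [skip; skip] <;> nlinarith [hx.1, hx.2]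
  -- Fubini helper for bounded measurable functions
  have hswap : ∀ (G : S → S → ℝ), Measurable (fun z : S × S => G z.1 z.2) →
      ∀ C : ℝ, (∀ u v, |G u v| ≤ C) →
      ∫ u, ∫ v, G u v ∂μ ∂μ = ∫ v, ∫ u, G u v ∂μ ∂μ := by
    intro G hGm C hGC
    refine integral_integral_swap ?_
    refine (integrable_const C).mono' hGm.aestronglyMeasurable (ae_of_all _ ?_)
    intro z
    simpa [Function.uncurry_def] using hGC z.1 z.2
  -- the iterated kernels F n
  have hFn : ∀ n : ℕ, ∃ F : S × S → ℝ, Measurable F ∧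
      ∀ x y, F (x, y) = Pk^[n] (fun x' => k x' y) x := by
    intro n
    induction n with
    | zero => exact ⟨fun z => k z.1 z.2, hkm, fun x y => rfl⟩
    | succ n ih =>
      obtain ⟨F, hFm, hFe⟩ := ih
      refine ⟨fun z => ∫ w, k z.1 w * F (w, z.2) ∂μ, ?_, ?_⟩
      · have : StronglyMeasurable fun q : (S × S) × S => k q.1.1 q.2 * F (q.2, q.1.2) := by
          refine Measurable.stronglyMeasurable ?_
          exact (hkm.comp ((measurable_fst.comp measurable_fst).prodMk
            measurable_snd)).mul
            (hFm.comp (measurable_snd.prodMk (measurable_snd.comp measurable_fst)))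
        exact this.integral_prod_right'.measurable
      · intro x y
        rw [Function.iterate_succ_apply']
        simp only [hPk_def]
        congr 1
        funext w
        rw [hFe w y]
  choose F hFm hFe using hFn
  -- bounds on F
  have hkbnd : ∀ y, ∀ x, (0:ℝ) ≤ k x y ∧ k x y ≤ M := fun y x => ⟨hk0 x y, hMle x y⟩
  have hFbd : ∀ n x y, 0 ≤ F n (x, y) ∧ F n (x, y) ≤ M := by
    intro n x y
    rw [hFe n x y]
    exact (hiterbd (fun x' => k x' y) ((hkc.comp
      (continuous_id.prodMk continuous_const)).measurable) 0 M (hkbnd y) n).2 x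
  have hFabs : ∀ n x y, |F n (x, y)| ≤ M := by
    intro n x y
    rw [abs_of_nonneg (hFbd n x y).1]
    exact (hFbd n x y).2
  -- left recursion, derived
  have hFleft : ∀ n x y, F (n+1) (x, y) = ∫ w, k x w * F n (w, y) ∂μ := by
    intro n x y
    rw [hFe (n+1) x y, Function.iterate_succ_apply']
    simp only [hPk_def]
    congr 1
    funext w
    rw [hFe n w y]
  -- right recursion, via Fubini
  have hFright : ∀ n x y, F (n+1) (x, y) = ∫ w, F n (x, w) * k w y ∂μ := by
    intro n
    induction n with
    | zero =>
      intro x y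
      rw [hFleft 0 x y]
      congr 1
      funext w
      rw [hFe 0 w y, hFe 0 x w]
      simp
    | succ n ih =>
      intro x y
      rw [hFleft (n+1) x y]
      have h1 : ∀ w, k x w * F (n+1) (w, y) = ∫ v, k x w * (F n (w, v) * k v y) ∂μ := by
        intro w
        rw [ih w y, ← integral_const_mul]
      have h2 : ∫ w, k x w * F (n+1) (w, y) ∂μ
          = ∫ w, ∫ v, k x w * (F n (w, v) * k v y) ∂μ ∂μ := by
        congr 1
        funext w
        exact h1 w
      rw [h2]
      have hswapped : ∫ w, ∫ v, k x w * (F n (w, v) * k v y) ∂μ ∂μ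
          = ∫ v, ∫ w, k x w * (F n (w, v) * k v y) ∂μ ∂μ := by
        refine hswap (fun w v => k x w * (F n (w, v) * k v y)) ?_ (M * (M * M)) ?_
        · exact ((hkx x).comp measurable_fst).mul
            (((hFm n).comp (measurable_fst.prodMk measurable_snd)).mul
              ((hky y).comp measurable_snd))
        · intro u v
          rw [abs_mul, abs_mul]
          refine mul_le_mul (by rw [abs_of_nonneg (hk0 x u)]; exact hMle x u)
            (mul_le_mul (hFabs n u v) (by rw [abs_of_nonneg (hk0 v y)]; exact hMle v y)
              (abs_nonneg _) (by linarith)) (by positivity) (by linarith)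
      rw [hswapped]
      congr 1
      funext v
      rw [hFleft n x v, ← integral_mul_const]
      congr 1
      funext w
      ring
  -- Pk of constant one
  have hP1 : ∀ n, Pk^[n] (fun _ => (1:ℝ)) = fun _ => (1:ℝ) := by
    intro n
    induction n with
    | zero => rfl
    | succ n ih =>
      rw [Function.iterate_succ_apply', ih]
      funext x
      simp only [hPk_def, mul_one]
      exact hkint x
  -- representation of iterates via F
  have hPint : ∀ n (φ : S → ℝ), Measurable φ → ∀ C : ℝ, (∀ y, |φ y| ≤ C) →
      ∀ x, Pk^[n+1] φ x = ∫ y, F n (x, y) * φ y ∂μ := by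
    intro n
    induction n with
    | zero =>
      intro φ hm C hC x
      rw [zero_add, Function.iterate_one]
      simp only [hPk_def]
      congr 1
      funext y
      rw [hFe 0 x y]
      simp
    | succ n ih =>
      intro φ hm C hC x
      have hC0 : 0 ≤ C := le_trans (abs_nonneg _) (hC (Classical.arbitrary S))
      have hPφm : Measurable (Pk φ) := hPmeas φ hm
      have hφbd : ∀ y, -C ≤ φ y ∧ φ y ≤ C := fun y => abs_le.mp (hC y)
      have hPφbd : ∀ y, |Pk φ y| ≤ C := by
        intro y
        rw [abs_le]
        exact hPbd φ hm (-C) C hφbd y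
      rw [Function.iterate_succ_apply, ih (Pk φ) hPφm C hPφbd x]
      have h1 : ∫ y, F n (x, y) * Pk φ y ∂μ
          = ∫ y, ∫ z, F n (x, y) * (k y z * φ z) ∂μ ∂μ := by
        congr 1
        funext y
        rw [← integral_const_mul]
      have hGm : Measurable fun q : S × S => F n (x, q.1) * (k q.1 q.2 * φ q.2) :=
        ((hFm n).comp (measurable_const.prodMk measurable_fst)).mul
          (hkm.mul (hm.comp measurable_snd))
      have h2 : ∫ y, ∫ z, F n (x, y) * (k y z * φ z) ∂μ ∂μ
          = ∫ z, ∫ y, F n (x, y) * (k y z * φ z) ∂μ ∂μ := by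
        refine hswap (fun y z => F n (x, y) * (k y z * φ z)) hGm (M * (M * C)) ?_
        intro u v
        rw [abs_mul, abs_mul]
        exact mul_le_mul (hFabs n x u)
          (mul_le_mul (by rw [abs_of_nonneg (hk0 u v)]; exact hMle u v) (hC v)
            (abs_nonneg _) (by linarith)) (by positivity) (by linarith)
      rw [h1, h2]
      congr 1
      funext z
      rw [hFright n x z, ← integral_mul_const]
      congr 1
      funext y
      ring
  -- normalization of F
  have hint1 : ∀ n x, ∫ y, F n (x, y) ∂μ = 1 := by
    intro n x
    have h := hPint n (fun _ => (1:ℝ)) measurable_const 1 (by intro y; simp) x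
    rw [hP1 (n+1)] at h
    simp only [mul_one] at h
    exact h.symm
  -- the invariant density g
  have hkey' := fun y => hkey (fun x => k x y) (hky y) 0 M (hkbnd y)
  choose g hg1 hg2 using hkey'
  have hFxs_m : ∀ n, Measurable fun y => F n (xs, y) :=
    fun n => (hFm n).comp measurable_prodMk_left
  have hgm : Measurable g := by
    refine measurable_of_tendsto_metrizable' atTop hFxs_m ?_
    rw [tendsto_pi_nhds]
    intro y
    have : (fun n => F n (xs, y)) = fun n => Pk^[n] (fun x => k x y) xs := by
      funext n
      exact hFe n xs y
    rw [this]
    exact hg1 y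
  have hgbd : ∀ y, 0 ≤ g y ∧ g y ≤ M := by
    intro y
    have hb := fun n => (hiterbd (fun x => k x y) (hky y) 0 M (hkbnd y) n).2 xs
    exact ⟨ge_of_tendsto (hg1 y) (Eventually.of_forall fun n => (hb n).1),
      le_of_tendsto (hg1 y) (Eventually.of_forall fun n => (hb n).2)⟩
  have hgabs : ∀ y, |g y| ≤ M := by
    intro y
    rw [abs_of_nonneg (hgbd y).1]
    exact (hgbd y).2
  -- main identity: ∫ g φ dμ equals the limit of Pⁿφ(xs)
  have hglim : ∀ (φ : S → ℝ), Measurable φ → ∀ C : ℝ, (∀ y, |φ y| ≤ C) →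
      ∀ ℓ : ℝ, Tendsto (fun n => Pk^[n] φ xs) atTop (𝓝 ℓ) →
      ∫ y, g y * φ y ∂μ = ℓ := by
    intro φ hm C hC ℓ hT
    have hC0 : 0 ≤ C := le_trans (abs_nonneg _) (hC (Classical.arbitrary S))
    have hTa : Tendsto (fun n => ∫ y, F n (xs, y) * φ y ∂μ) atTop (𝓝 ℓ) := by
      have h1 : (fun n => ∫ y, F n (xs, y) * φ y ∂μ) = fun n => Pk^[n+1] φ xs := by
        funext n
        exact (hPint n φ hm C hC xs).symm
      rw [h1]
      exact hT.comp (tendsto_add_atTop_nat 1)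
    have hdist : ∀ n, dist (∫ y, F n (xs, y) * φ y ∂μ) (∫ y, g y * φ y ∂μ)
        ≤ M * C * lam ^ n := by
      intro n
      have hi1 : Integrable (fun y => F n (xs, y) * φ y) μ := by
        refine aux_integrable μ ((hFxs_m n).mul hm) (C := M * C) fun y => ?_
        rw [abs_mul]
        exact mul_le_mul (hFabs n xs y) (hC y) (abs_nonneg _) (by linarith)
      have hi2 : Integrable (fun y => g y * φ y) μ := by
        refine aux_integrable μ (hgm.mul hm) (C := M * C) fun y => ?_
        rw [abs_mul]
        exact mul_le_mul (hgabs y) (hC y) (abs_nonneg _) (by linarith)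
      rw [Real.dist_eq, ← integral_sub hi1 hi2]
      have hptw : ∀ y, |F n (xs, y) * φ y - g y * φ y| ≤ (lam ^ n * M) * C := by
        intro y
        have h2 := hg2 y n xs
        rw [← hFe n xs y] at h2
        calc |F n (xs, y) * φ y - g y * φ y| = |F n (xs, y) - g y| * |φ y| := by
              rw [← abs_mul]; ring_nf
          _ ≤ (lam ^ n * M) * C := by
              refine mul_le_mul ?_ (hC y) (abs_nonneg _) (by positivity)
              simpa using h2
      calc |∫ y, (F n (xs, y) * φ y - g y * φ y) ∂μ|
          ≤ ∫ y, |F n (xs, y) * φ y - g y * φ y| ∂μ := by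
            simpa [Real.norm_eq_abs] using
              norm_integral_le_integral_norm (μ := μ)
                (fun y => F n (xs, y) * φ y - g y * φ y)
        _ ≤ ∫ _y, (lam ^ n * M) * C ∂μ := by
            refine integral_mono (hi1.sub hi2).abs (integrable_const _) fun y => hptw y
        _ = (lam ^ n * M) * C := by simp
        _ = M * C * lam ^ n := by ring
    have hgeo : Tendsto (fun n : ℕ => M * C * lam ^ n) atTop (𝓝 0) := by
      simpa using (tendsto_pow_atTop_nhds_zero_of_lt_one hlam0.le hlam1).const_mul (M * C)
    have hT2 : Tendsto (fun n => ∫ y, F n (xs, y) * φ y ∂μ) atTop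
        (𝓝 (∫ y, g y * φ y ∂μ)) := by
      rw [tendsto_iff_dist_tendsto_zero]
      exact squeeze_zero (fun n => dist_nonneg) hdist hgeo
    exact tendsto_nhds_unique hT2 hTa
  -- g integrates to 1
  have hgint1 : ∫ y, g y ∂μ = 1 := by
    have h := hglim (fun _ => 1) measurable_const 1 (by intro y; simp) 1 ?_
    · simpa using h
    · have : (fun n => Pk^[n] (fun _ => (1:ℝ)) xs) = fun _ => (1:ℝ) := by
        funext n
        rw [hP1 n]
      rw [this]
      exact tendsto_const_nhds
  -- the invariant measure
  set π : Measure S := μ.withDensity (fun y => ENNReal.ofReal (g y)) with hπ_def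
  have hgint : Integrable g μ := aux_integrable μ hgm hgabs
  have hπprob : IsProbabilityMeasure π := by
    constructor
    rw [hπ_def, withDensity_apply _ MeasurableSet.univ, Measure.restrict_univ]
    rw [← ofReal_integral_eq_lintegral_ofReal hgint (ae_of_all _ fun y => (hgbd y).1)]
    rw [hgint1]
    simp
  have hπint : ∀ (φ : S → ℝ), Measurable φ → ∫ x, φ x ∂π = ∫ y, g y * φ y ∂μ := by
    intro φ hm
    have hnn : Measurable fun y => (g y).toNNReal := measurable_real_toNNReal.comp hgm
    have hrw : π = μ.withDensity fun y => (((g y).toNNReal : ℝ≥0) : ℝ≥0∞) := rfl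
    rw [hrw, integral_withDensity_eq_integral_smul hnn]
    congr 1
    funext y
    simp [NNReal.smul_def, Real.coe_toNNReal _ (hgbd y).1]
  have hπℓ : ∀ (φ : S → ℝ), Measurable φ → ∀ C : ℝ, (∀ y, |φ y| ≤ C) →
      ∀ ℓ : ℝ, Tendsto (fun n => Pk^[n] φ xs) atTop (𝓝 ℓ) → ∫ x, φ x ∂π = ℓ := by
    intro φ hm C hC ℓ hT
    rw [hπint φ hm]
    exact hglim φ hm C hC ℓ hT
  -- indicator facts
  have hPind : ∀ E : Set S, MeasurableSet E → ∀ x,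
      Pk (E.indicator fun _ => (1:ℝ)) x = ∫ y in E, k x y ∂μ := by
    intro E hE x
    simp only [hPk_def]
    rw [← integral_indicator hE]
    congr 1
    funext y
    by_cases hy : y ∈ E <;> simp [hy]
  have hind_meas : ∀ E : Set S, MeasurableSet E →
      Measurable (E.indicator fun _ => (1:ℝ)) := fun E hE => measurable_const.indicator hE
  have hind_bds : ∀ E : Set S, ∀ y, (0:ℝ) ≤ E.indicator (fun _ => (1:ℝ)) y ∧
      E.indicator (fun _ => (1:ℝ)) y ≤ 1 := by
    intro E y
    by_cases hy : y ∈ E <;> simp [hy]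
  -- set invariance of π
  have hπinv : ∀ E : Set S, MeasurableSet E →
      (π E).toReal = ∫ x, (∫ y in E, k x y ∂μ) ∂π := by
    intro E hE
    obtain ⟨ℓE, hT, hb⟩ := hkey (E.indicator fun _ => (1:ℝ)) (hind_meas E hE) 0 1 (hind_bds E)
    have hL : (π E).toReal = ℓE := by
      have h1 : ∫ x, E.indicator (fun _ => (1:ℝ)) x ∂π = (π E).toReal • (1:ℝ) :=
        integral_indicator_const (1:ℝ) hE
      have h2 : ∫ x, E.indicator (fun _ => (1:ℝ)) x ∂π = ℓE := by
        refine hπℓ _ (hind_meas E hE) 1 (fun y => ?_) ℓE hT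
        have := hind_bds E y
        rw [abs_le]
        exact ⟨by linarith [this.1], this.2⟩
      rw [← h2, h1]
      simp
    have hR : ∫ x, (∫ y in E, k x y ∂μ) ∂π = ℓE := by
      have hre : (fun x => ∫ y in E, k x y ∂μ) = Pk (E.indicator fun _ => (1:ℝ)) := by
        funext x
        exact (hPind E hE x).symm
      rw [hre]
      have hPm : Measurable (Pk (E.indicator fun _ => (1:ℝ))) := hPmeas _ (hind_meas E hE)
      have hPb := hPbd _ (hind_meas E hE) 0 1 (hind_bds E)
      refine hπℓ _ hPm 1 (fun y => ?_) ℓE ?_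
      · rw [abs_le]
        exact ⟨by linarith [(hPb y).1], (hPb y).2⟩
      · have h3 : (fun n => Pk^[n] (Pk (E.indicator fun _ => (1:ℝ))) xs)
            = fun n => Pk^[n+1] (E.indicator fun _ => (1:ℝ)) xs := by
          funext n
          rw [Function.iterate_succ_apply]
        rw [h3]
        exact hT.comp (tendsto_add_atTop_nat 1)
    rw [hL, hR]
  -- uniqueness
  have huniq : ∀ π' : Measure S, IsProbabilityMeasure π' →
      (∀ E, MeasurableSet E → (π' E).toReal = ∫ x, (∫ y in E, k x y ∂μ) ∂π') → π' = π := by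
    intro π' hπ' hinv'
    have claimC : ∀ f : S → ℝ≥0∞, Measurable f →
        ∫⁻ y, f y ∂π' = ∫⁻ x, ∫⁻ y, ENNReal.ofReal (k x y) * f y ∂μ ∂π' := by
      intro f hf
      refine Measurable.ennreal_induction
        (motive := fun f => ∫⁻ y, f y ∂π' = ∫⁻ x, ∫⁻ y, ENNReal.ofReal (k x y) * f y ∂μ ∂π')
        ?_ ?_ ?_ hf
      · intro c E hE
        have hrh_m : Measurable fun x => ∫ y in E, k x y ∂μ :=
          (hkm.stronglyMeasurable.integral_prod_right'
            (ν := μ.restrict E)).measurable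
        have hrh_nn : ∀ x, 0 ≤ ∫ y in E, k x y ∂μ := fun x =>
          integral_nonneg (fun y => hk0 x y)
        have hrh_int : ∀ x, Integrable (fun y => k x y) (μ.restrict E) := by
          intro x
          exact (aux_integrable μ (hkx x) (C := M) fun y => by
            rw [abs_of_nonneg (hk0 x y)]; exact hMle x y).restrict
        have hrh_bd : ∀ x, |∫ y in E, k x y ∂μ| ≤ 1 := by
          intro x
          rw [abs_of_nonneg (hrh_nn x)]
          calc ∫ y in E, k x y ∂μ ≤ ∫ y, k x y ∂μ :=
                setIntegral_le_integral (aux_integrable μ (hkx x) (C := M) fun y => by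
                  rw [abs_of_nonneg (hk0 x y)]; exact hMle x y)
                  (ae_of_all _ fun y => hk0 x y)
            _ = 1 := hkint x
        have hofr : ∀ x, ENNReal.ofReal (∫ y in E, k x y ∂μ)
            = ∫⁻ y in E, ENNReal.ofReal (k x y) ∂μ := fun x =>
          ofReal_integral_eq_lintegral_ofReal (hrh_int x) (ae_of_all _ fun y => hk0 x y)
        have hπ'E : π' E = ∫⁻ x, (∫⁻ y in E, ENNReal.ofReal (k x y) ∂μ) ∂π' := by
          have h1 : π' E = ENNReal.ofReal ((π' E).toReal) :=
            (ENNReal.ofReal_toReal (measure_ne_top π' E)).symm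
          rw [h1, hinv' E hE,
            ofReal_integral_eq_lintegral_ofReal
              (aux_integrable π' hrh_m (C := 1) hrh_bd)
              (ae_of_all _ fun x => hrh_nn x)]
          congr 1
          funext x
          exact hofr x
        have hhm : Measurable fun x => ∫⁻ y in E, ENNReal.ofReal (k x y) ∂μ :=
          Measurable.lintegral_prod_right' (f := fun q : S × S => ENNReal.ofReal (k q.1 q.2))
            (hkm.ennreal_ofReal)
        calc ∫⁻ y, E.indicator (fun _ => c) y ∂π' = c * π' E := by
              rw [lintegral_indicator_const hE]
          _ = c * ∫⁻ x, (∫⁻ y in E, ENNReal.ofReal (k x y) ∂μ) ∂π' := by rw [hπ'E]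
          _ = ∫⁻ x, c * (∫⁻ y in E, ENNReal.ofReal (k x y) ∂μ) ∂π' := by
              rw [lintegral_const_mul c hhm]
          _ = ∫⁻ x, ∫⁻ y, ENNReal.ofReal (k x y) * E.indicator (fun _ => c) y ∂μ ∂π' := by
              congr 1
              funext x
              have h2 : ∀ y, ENNReal.ofReal (k x y) * E.indicator (fun _ => c) y
                  = E.indicator (fun y => ENNReal.ofReal (k x y) * c) y := by
                intro y
                by_cases hy : y ∈ E <;> simp [hy]
              calc c * ∫⁻ y in E, ENNReal.ofReal (k x y) ∂μ
                  = ∫⁻ y in E, c * ENNReal.ofReal (k x y) ∂μ := by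
                    rw [lintegral_const_mul c ((hkx x).ennreal_ofReal)]
                _ = ∫⁻ y in E, ENNReal.ofReal (k x y) * c ∂μ := by
                    congr 1
                    funext y
                    rw [mul_comm]
                _ = ∫⁻ y, E.indicator (fun y => ENNReal.ofReal (k x y) * c) y ∂μ := by
                    rw [lintegral_indicator hE]
                _ = ∫⁻ y, ENNReal.ofReal (k x y) * E.indicator (fun _ => c) y ∂μ := by
                    congr 1
                    funext y
                    rw [h2 y]
      · intro f' g' hd hfm hgm' hf' hg'
        have hAm : Measurable fun x => ∫⁻ y, ENNReal.ofReal (k x y) * f' y ∂μ :=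
          Measurable.lintegral_prod_right'
            (f := fun q : S × S => ENNReal.ofReal (k q.1 q.2) * f' q.2)
            (hkm.ennreal_ofReal.mul (hfm.comp measurable_snd))
        calc ∫⁻ y, (f' + g') y ∂π' = (∫⁻ y, f' y ∂π') + ∫⁻ y, g' y ∂π' := by
              simp only [Pi.add_apply]
              exact lintegral_add_left hfm _
          _ = (∫⁻ x, ∫⁻ y, ENNReal.ofReal (k x y) * f' y ∂μ ∂π')
              + ∫⁻ x, ∫⁻ y, ENNReal.ofReal (k x y) * g' y ∂μ ∂π' := by rw [hf', hg']
          _ = ∫⁻ x, (∫⁻ y, ENNReal.ofReal (k x y) * f' y ∂μ)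
              + (∫⁻ y, ENNReal.ofReal (k x y) * g' y ∂μ) ∂π' := by
              rw [lintegral_add_left hAm]
          _ = ∫⁻ x, ∫⁻ y, ENNReal.ofReal (k x y) * (f' + g') y ∂μ ∂π' := by
              congr 1
              funext x
              rw [← lintegral_add_left (show Measurable fun y => ENNReal.ofReal (k x y) * f' y from
                (hkx x).ennreal_ofReal.mul hfm)]
              congr 1
              funext y
              simp [mul_add]
      · intro f' hfm hmono hf'
        have hAm : ∀ n, Measurable fun x => ∫⁻ y, ENNReal.ofReal (k x y) * f' n y ∂μ :=
          fun n => Measurable.lintegral_prod_right'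
            (f := fun q : S × S => ENNReal.ofReal (k q.1 q.2) * f' n q.2)
            (hkm.ennreal_ofReal.mul ((hfm n).comp measurable_snd))
        calc ∫⁻ y, (⨆ n, f' n y) ∂π' = ⨆ n, ∫⁻ y, f' n y ∂π' := lintegral_iSup hfm hmono
          _ = ⨆ n, ∫⁻ x, ∫⁻ y, ENNReal.ofReal (k x y) * f' n y ∂μ ∂π' := by
              congr 1
              funext n
              exact hf' n
          _ = ∫⁻ x, ⨆ n, ∫⁻ y, ENNReal.ofReal (k x y) * f' n y ∂μ ∂π' := by
              refine (lintegral_iSup hAm ?_).symm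
              intro m n hmn x
              exact lintegral_mono fun y =>
                mul_le_mul_right (hmono hmn y) _
          _ = ∫⁻ x, ∫⁻ y, ENNReal.ofReal (k x y) * (⨆ n, f' n y) ∂μ ∂π' := by
              congr 1
              funext x
              rw [← lintegral_iSup (fun n => show Measurable fun y => ENNReal.ofReal (k x y) * f' n y from
                  (hkx x).ennreal_ofReal.mul (hfm n))
                (fun m n hmn y => mul_le_mul_right (hmono hmn y) _)]
              congr 1
              funext y
              rw [ENNReal.mul_iSup]
    -- one-step invariance for nonnegative bounded functions
    have hstep : ∀ (ψ : S → ℝ), Measurable ψ → ∀ C : ℝ, (∀ y, 0 ≤ ψ y ∧ ψ y ≤ C) →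
        ∫ x, ψ x ∂π' = ∫ x, Pk ψ x ∂π' := by
      intro ψ hm C hbds
      have hC0 : 0 ≤ C := le_trans (hbds (Classical.arbitrary S)).1
        (hbds (Classical.arbitrary S)).2
      have habsψ : ∀ y, |ψ y| ≤ C := by
        intro y
        rw [abs_of_nonneg (hbds y).1]
        exact (hbds y).2
      have hPψbd := hPbd ψ hm 0 C hbds
      have habsPψ : ∀ y, |Pk ψ y| ≤ C := by
        intro y
        rw [abs_of_nonneg (hPψbd y).1]
        exact (hPψbd y).2
      have hcc := claimC (fun y => ENNReal.ofReal (ψ y)) hm.ennreal_ofReal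
      have hinner : ∀ x, ∫⁻ y, ENNReal.ofReal (k x y) * ENNReal.ofReal (ψ y) ∂μ
          = ENNReal.ofReal (Pk ψ x) := by
        intro x
        rw [show (Pk ψ x) = ∫ y, k x y * ψ y ∂μ from rfl,
          ofReal_integral_eq_lintegral_ofReal (hinteg ψ hm C habsψ x)
            (ae_of_all _ fun y => mul_nonneg (hk0 x y) (hbds y).1)]
        congr 1
        funext y
        rw [ENNReal.ofReal_mul (hk0 x y)]
      rw [show (∫⁻ x, ∫⁻ y, ENNReal.ofReal (k x y) * ENNReal.ofReal (ψ y) ∂μ ∂π')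
          = ∫⁻ x, ENNReal.ofReal (Pk ψ x) ∂π' from by
            congr 1
            funext x
            exact hinner x] at hcc
      rw [← ofReal_integral_eq_lintegral_ofReal
          (aux_integrable π' hm habsψ) (ae_of_all _ fun y => (hbds y).1),
        ← ofReal_integral_eq_lintegral_ofReal
          (aux_integrable π' (hPmeas ψ hm) habsPψ) (ae_of_all _ fun y => (hPψbd y).1)]
          at hcc
      exact (ENNReal.ofReal_eq_ofReal_iff
        (integral_nonneg fun y => (hbds y).1)
        (integral_nonneg fun y => (hPψbd y).1)).mp hcc
    -- iterate invariance
    have hiterinv : ∀ (ψ : S → ℝ), Measurable ψ → ∀ C : ℝ, (∀ y, 0 ≤ ψ y ∧ ψ y ≤ C) →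
        ∀ n, ∫ x, ψ x ∂π' = ∫ x, Pk^[n] ψ x ∂π' := by
      intro ψ hm C hbds n
      induction n with
      | zero => rfl
      | succ n ih =>
        rw [ih, Function.iterate_succ_apply']
        exact hstep (Pk^[n] ψ) (hiterbd ψ hm 0 C hbds n).1 C (hiterbd ψ hm 0 C hbds n).2
    -- conclude: π' agrees with π on every measurable set
    refine Measure.ext fun E hE => ?_
    obtain ⟨ℓE, hT, hb⟩ := hkey (E.indicator fun _ => (1:ℝ)) (hind_meas E hE) 0 1 (hind_bds E)
    have habs1 : ∀ y, |E.indicator (fun _ => (1:ℝ)) y| ≤ 1 := by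
      intro y
      rw [abs_of_nonneg (hind_bds E y).1]
      exact (hind_bds E y).2
    have hπ'E : (π' E).toReal = ∫ x, E.indicator (fun _ => (1:ℝ)) x ∂π' := by
      rw [integral_indicator_const (1:ℝ) hE]
      simp [measureReal_def]
    have hπ'ℓ : (π' E).toReal = ℓE := by
      have hbound : ∀ n : ℕ, |(π' E).toReal - ℓE| ≤ lam ^ n := by
        intro n
        rw [hπ'E, hiterinv _ (hind_meas E hE) 1 (hind_bds E) n]
        have hib := hiterbd _ (hind_meas E hE) 0 1 (hind_bds E) n
        have h1 : Integrable (fun x => Pk^[n] (E.indicator fun _ => (1:ℝ)) x - ℓE) π' := by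
          refine Integrable.sub (aux_integrable π' hib.1 (C := 1) fun y => ?_)
            (integrable_const ℓE)
          rw [abs_of_nonneg (hib.2 y).1]
          exact (hib.2 y).2
        calc |(∫ x, Pk^[n] (E.indicator fun _ => (1:ℝ)) x ∂π') - ℓE|
            = |∫ x, (Pk^[n] (E.indicator fun _ => (1:ℝ)) x - ℓE) ∂π'| := by
              rw [integral_sub (aux_integrable π' hib.1 (C := 1) fun y => by
                  rw [abs_of_nonneg (hib.2 y).1]; exact (hib.2 y).2)
                (integrable_const ℓE)]
              simp
          _ ≤ ∫ x, |Pk^[n] (E.indicator fun _ => (1:ℝ)) x - ℓE| ∂π' := by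
              simpa [Real.norm_eq_abs] using norm_integral_le_integral_norm (μ := π')
                (fun x => Pk^[n] (E.indicator fun _ => (1:ℝ)) x - ℓE)
          _ ≤ ∫ _x, lam ^ n ∂π' := by
              refine integral_mono h1.abs (integrable_const _) fun x => ?_
              have := hb n x
              simpa using this
          _ = lam ^ n := by simp
      have h0 : |(π' E).toReal - ℓE| ≤ 0 :=
        ge_of_tendsto (tendsto_pow_atTop_nhds_zero_of_lt_one hlam0.le hlam1)
          (Eventually.of_forall hbound)
      have := abs_nonneg ((π' E).toReal - ℓE)
      have : (π' E).toReal - ℓE = 0 := by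
        rw [← abs_eq_zero]
        linarith
      linarith
    have hπℓE : (π E).toReal = ℓE := by
      have h1 : ∫ x, E.indicator (fun _ => (1:ℝ)) x ∂π = ℓE :=
        hπℓ _ (hind_meas E hE) 1 habs1 ℓE hT
      rw [integral_indicator_const (1:ℝ) hE] at h1
      simpa [measureReal_def] using h1
    exact (ENNReal.toReal_eq_toReal_iff' (measure_ne_top π' E) (measure_ne_top π E)).mp
      (by rw [hπ'ℓ, hπℓE])
  -- assemble
  refine ⟨π, hπprob, hπinv, huniq, ?_⟩
  intro φ hm K hK n x
  obtain ⟨ℓ, hT, hb⟩ := hkey φ hm (-K) K (fun y => abs_le.mp (hK y))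
  have hℓint : ∫ y, φ y ∂π = ℓ := hπℓ φ hm K hK ℓ hT
  rw [hℓint]
  calc |Pk^[n] φ x - ℓ| ≤ lam ^ n * (K - -K) := hb n x
    _ = 2 * K * lam ^ n := by ring

end Aux

/-- family version of the Doob-type ergodic theorem, uniform in the
parameter `τ`: for each `τ` there is a unique invariant probability measure `π_τ` of
`P_τ`, and `P_τⁿφ → ∫ φ dπ_τ` uniformly in `x` and in `τ`, with explicit constants
`ρ = log(1/(1−δμ(U₀)))` and `C = 2/(1−δμ(U₀))` independent of `τ` and `φ`. -/
theorem stmt_3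
    {S : Type*} [MetricSpace S] [CompactSpace S] [Nonempty S]
    [MeasurableSpace S] [BorelSpace S]
    (μ : Measure S) [IsProbabilityMeasure μ]
    {T : Type*} [Nonempty T]
    (p : T → S × S → ℝ)
    (hp_cont : ∀ τ, Continuous (p τ)) (hp_nonneg : ∀ τ z, 0 ≤ p τ z)
    (hp_int : ∀ τ, ∀ x : S, ∫ y, p τ (x, y) ∂μ = 1)
    (P : T → (S → ℝ) → (S → ℝ))
    (hP : ∀ τ, ∀ (φ : S → ℝ) (x : S), P τ φ x = ∫ y, p τ (x, y) * φ y ∂μ)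
    (U₀ : Set S) (hU₀ : MeasurableSet U₀)
    (δ : ℝ) (hδ : 0 < δ)
    (hδμ_pos : 0 < δ * (μ U₀).toReal) (hδμ_lt : δ * (μ U₀).toReal < 1)
    (hp_low : ∀ τ, ∀ x : S, ∀ y ∈ U₀, δ ≤ p τ (x, y)) :
    0 < Real.log (1 / (1 - δ * (μ U₀).toReal)) ∧
    ∀ τ : T, ∃ π : Measure S, IsProbabilityMeasure π ∧
      (∀ E : Set S, MeasurableSet E →
        (π E).toReal = ∫ x, (∫ y in E, p τ (x, y) ∂μ) ∂π) ∧
      (∀ π' : Measure S, IsProbabilityMeasure π' →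
        (∀ E : Set S, MeasurableSet E →
          (π' E).toReal = ∫ x, (∫ y in E, p τ (x, y) ∂μ) ∂π') → π' = π) ∧
      (∀ φ : S → ℝ, Measurable φ → (∃ M : ℝ, ∀ x, |φ x| ≤ M) →
        ∀ n : ℕ, 1 ≤ n → ∀ x : S,
          |((P τ)^[n] φ) x - ∫ y, φ y ∂π| ≤
            (2 / (1 - δ * (μ U₀).toReal)) * (⨆ z : S, |φ z|) *
              Real.exp (-(Real.log (1 / (1 - δ * (μ U₀).toReal))) * n)) := by
  set lam : ℝ := 1 - δ * (μ U₀).toReal with hlam_def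
  have hlam0 : 0 < lam := by simp only [hlam_def]; linarith
  have hlam1 : lam < 1 := by simp only [hlam_def]; linarith
  have hρ : 0 < Real.log (1 / lam) := Real.log_pos (one_lt_one_div hlam0 hlam1)
  have hexp : ∀ n : ℕ, Real.exp (-(Real.log (1 / lam)) * n) = lam ^ n := by
    intro n
    rw [one_div, Real.log_inv, neg_neg]
    rw [show Real.log lam * (n:ℝ) = (n:ℝ) * Real.log lam from by ring,
      Real.exp_nat_mul, Real.exp_log hlam0]
  refine ⟨hρ, fun τ => ?_⟩
  have hkc : Continuous fun z : S × S => p τ (z.1, z.2) := by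
    simpa using hp_cont τ
  obtain ⟨π, hπprob, hπinv, hπuniq, hπconv⟩ :=
    doeblin_main μ (fun x y => p τ (x, y)) hkc (fun x y => hp_nonneg τ (x, y))
      (hp_int τ) U₀ hU₀ δ hδ hδμ_pos hδμ_lt (fun x y hy => hp_low τ x y hy)
  refine ⟨π, hπprob, hπinv, hπuniq, ?_⟩
  intro φ hφm hφbd n hn x
  obtain ⟨M₀, hM₀⟩ := hφbd
  have hbdd : BddAbove (Set.range fun z : S => |φ z|) := ⟨M₀, by
    rintro v ⟨z, rfl⟩
    exact hM₀ z⟩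
  set K : ℝ := ⨆ z : S, |φ z| with hK_def
  have hKbd : ∀ z, |φ z| ≤ K := fun z => le_ciSup hbdd z
  have hK0 : 0 ≤ K := le_trans (abs_nonneg _) (hKbd (Classical.arbitrary S))
  have hPeq : P τ = fun ψ x => ∫ y, p τ (x, y) * ψ y ∂μ := by
    funext ψ x
    exact hP τ ψ x
  have hmain := hπconv φ hφm K hKbd n x
  rw [hexp n, hPeq]
  calc |(fun ψ x => ∫ y, p τ (x, y) * ψ y ∂μ)^[n] φ x - ∫ y, φ y ∂π|
      ≤ 2 * K * lam ^ n := hmain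
    _ ≤ 2 / lam * K * lam ^ n := by
      have hpow : (0:ℝ) ≤ lam ^ n := pow_nonneg hlam0.le n
      have h2 : (2:ℝ) ≤ 2 / lam := by
        rw [le_div_iff₀ hlam0]
        linarith
      exact mul_le_mul_of_nonneg_right (mul_le_mul_of_nonneg_right h2 hK0) hpow
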